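/- Let H, H₁ ∈ B(𝓗) with H self-adjoint and spectrum of H contained in [1,∞). Then the map x ↦ x²·(x²·1 + H)⁻¹·H₁·(x²·1 + H)⁻¹·(√H)⁻¹ is Bochner integrable on (0,∞) and ‖(2/π) · ∫_{(0,∞)} x²·(x²·1 + H)⁻¹·H₁·(x²·1 + H)⁻¹·(√H)⁻¹ dx‖ ≤ ‖H₁·(√H)⁻¹‖. -/

import Mathlib

open MeasureTheory
set_option synthInstance.maxHeartbeats 1000000
set_option maxHeartbeats 1000000

variable {𝓗 : Type*} [NormedAddCommGroup 𝓗] [InnerProductSpace ℂ 𝓗] [CompleteSpace 𝓗]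

lemma inv_helper_stmt13 {A : Type*} [MonoidWithZero A] {a b : A} (h1 : a * b = 1)
    (h2 : b * a = 1) : Ring.inverse a = b := by
  have hu : IsUnit a := ⟨⟨a, b, h1, h2⟩, rfl⟩
  calc Ring.inverse a = b * a * Ring.inverse a := by rw [h2, one_mul]
  _ = b * (a * Ring.inverse a) := mul_assoc _ _ _
  _ = b := by rw [Ring.mul_inverse_cancel a hu, mul_one]

/-- For `H, H₁ ∈ B(𝓗)` with `H` self-adjoint and spectrum in `[1,∞)`, the map
`x ↦ x²·(x²·1 + H)⁻¹·H₁·(x²·1 + H)⁻¹·(√H)⁻¹` is Bochner integrable on `(0,∞)` and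
the norm of `(2/π)` times its integral is at most `‖H₁·(√H)⁻¹‖`. -/
theorem stmt_13 (H H₁ : 𝓗 →L[ℂ] 𝓗) (hH : IsSelfAdjoint H)
    (hspec : spectrum ℝ H ⊆ Set.Ici 1) :
    IntegrableOn
      (fun x : ℝ => x ^ 2 •
        (Ring.inverse (x ^ 2 • (1 : 𝓗 →L[ℂ] 𝓗) + H) * H₁ *
          Ring.inverse (x ^ 2 • (1 : 𝓗 →L[ℂ] 𝓗) + H) * Ring.inverse (CFC.sqrt H)))
      (Set.Ioi 0) ∧
    ‖(2 / Real.pi) • ∫ x in Set.Ioi (0 : ℝ),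
        x ^ 2 • (Ring.inverse (x ^ 2 • (1 : 𝓗 →L[ℂ] 𝓗) + H) * H₁ *
          Ring.inverse (x ^ 2 • (1 : 𝓗 →L[ℂ] 𝓗) + H) * Ring.inverse (CFC.sqrt H))‖ ≤
      ‖H₁ * Ring.inverse (CFC.sqrt H)‖ := by
  have key : ∀ t ∈ spectrum ℝ H, (1:ℝ) ≤ t := fun t ht => hspec ht
  have hA : ∀ x : ℝ, x ^ 2 • (1 : 𝓗 →L[ℂ] 𝓗) + H = cfc (fun t : ℝ => x ^ 2 + t) H := by
    intro x
    rw [show (fun t : ℝ => x ^ 2 + t) = (fun t => x ^ 2 + id t) from rfl,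
      cfc_const_add (x ^ 2) id H (by fun_prop) hH, cfc_id ℝ H,
      Algebra.algebraMap_eq_smul_one]
  have hcg : ∀ x : ℝ, ContinuousOn (fun t : ℝ => (x ^ 2 + t)⁻¹) (spectrum ℝ H) := by
    intro x
    apply ContinuousOn.inv₀ (by fun_prop)
    intro t ht; nlinarith [key t ht]
  have hRinv : ∀ x : ℝ, Ring.inverse (x ^ 2 • (1 : 𝓗 →L[ℂ] 𝓗) + H) =
      cfc (fun t : ℝ => (x ^ 2 + t)⁻¹) H := by
    intro x
    apply inv_helper_stmt13
    · rw [hA x, ← cfc_mul _ _ H (by fun_prop) (hcg x), ← cfc_one (R := ℝ) H]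
      apply cfc_congr
      intro t ht
      have := key t ht
      have h0 : x ^ 2 + t ≠ 0 := by nlinarith
      simp [mul_inv_cancel₀ h0]
    · rw [hA x, ← cfc_mul _ _ H (hcg x) (by fun_prop), ← cfc_one (R := ℝ) H]
      apply cfc_congr
      intro t ht
      have := key t ht
      have h0 : x ^ 2 + t ≠ 0 := by nlinarith
      simp [inv_mul_cancel₀ h0]
  have hunit : ∀ x : ℝ, IsUnit (x ^ 2 • (1 : 𝓗 →L[ℂ] 𝓗) + H) := by
    intro x
    refine ⟨⟨_, cfc (fun t : ℝ => (x ^ 2 + t)⁻¹) H, ?_, ?_⟩, rfl⟩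
    · rw [hA x, ← cfc_mul _ _ H (by fun_prop) (hcg x), ← cfc_one (R := ℝ) H]
      apply cfc_congr
      intro t ht
      have := key t ht
      have h0 : x ^ 2 + t ≠ 0 := by nlinarith
      simp [mul_inv_cancel₀ h0]
    · rw [hA x, ← cfc_mul _ _ H (hcg x) (by fun_prop), ← cfc_one (R := ℝ) H]
      apply cfc_congr
      intro t ht
      have := key t ht
      have h0 : x ^ 2 + t ≠ 0 := by nlinarith
      simp [inv_mul_cancel₀ h0]
  have hnorm : ∀ x : ℝ, ‖Ring.inverse (x ^ 2 • (1 : 𝓗 →L[ℂ] 𝓗) + H)‖ ≤ (x ^ 2 + 1)⁻¹ := by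
    intro x
    rw [hRinv x]
    apply norm_cfc_le (by positivity)
    intro t ht
    have := key t ht
    rw [Real.norm_eq_abs, abs_of_nonneg (by positivity)]
    exact inv_anti₀ (by positivity) (by linarith)
  have hsqc : ContinuousOn (fun t : ℝ => (Real.sqrt t)⁻¹) (spectrum ℝ H) := by
    apply ContinuousOn.inv₀ (by fun_prop)
    intro t ht; have := key t ht; positivity
  have hsqrt : CFC.sqrt H = cfc Real.sqrt H := by
    apply CFC.sqrt_unique
    · rw [← cfc_mul _ _ H (by fun_prop) (by fun_prop)]
      conv_rhs => rw [← cfc_id ℝ H hH]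
      apply cfc_congr
      intro t ht
      exact Real.mul_self_sqrt (by linarith [key t ht])
    · exact cfc_nonneg fun t ht => Real.sqrt_nonneg t
  have hSinv : Ring.inverse (CFC.sqrt H) = cfc (fun t : ℝ => (Real.sqrt t)⁻¹) H := by
    rw [hsqrt]
    apply inv_helper_stmt13
    · rw [← cfc_mul _ _ H (by fun_prop) hsqc, ← cfc_one (R := ℝ) H]
      apply cfc_congr
      intro t ht
      have h1 := key t ht
      have h0 : Real.sqrt t ≠ 0 := by positivity
      simp [mul_inv_cancel₀ h0]
    · rw [← cfc_mul _ _ H hsqc (by fun_prop), ← cfc_one (R := ℝ) H]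
      apply cfc_congr
      intro t ht
      have h1 := key t ht
      have h0 : Real.sqrt t ≠ 0 := by positivity
      simp [inv_mul_cancel₀ h0]
  have hcomm : ∀ x : ℝ, Ring.inverse (x ^ 2 • (1 : 𝓗 →L[ℂ] 𝓗) + H) * Ring.inverse (CFC.sqrt H)
      = Ring.inverse (CFC.sqrt H) * Ring.inverse (x ^ 2 • (1 : 𝓗 →L[ℂ] 𝓗) + H) := by
    intro x
    rw [hRinv x, hSinv, ← cfc_mul _ _ H (hcg x) hsqc, ← cfc_mul _ _ H hsqc (hcg x)]
    exact cfc_congr fun t _ => mul_comm _ _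
  set K := H₁ * Ring.inverse (CFC.sqrt H) with hK
  have hbound : ∀ x : ℝ,
      ‖x ^ 2 • (Ring.inverse (x ^ 2 • (1 : 𝓗 →L[ℂ] 𝓗) + H) * H₁ *
        Ring.inverse (x ^ 2 • (1 : 𝓗 →L[ℂ] 𝓗) + H) * Ring.inverse (CFC.sqrt H))‖
      ≤ ‖K‖ * (1 + x ^ 2)⁻¹ := by
    intro x
    set R := Ring.inverse (x ^ 2 • (1 : 𝓗 →L[ℂ] 𝓗) + H) with hR
    have hre : R * H₁ * R * Ring.inverse (CFC.sqrt H) = R * K * R := by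
      rw [mul_assoc (R * H₁) R _, hcomm x, ← mul_assoc (R * H₁) _ R, mul_assoc R H₁ _]
    rw [hre, norm_smul, Real.norm_eq_abs, abs_of_nonneg (by positivity)]
    have h1 : (0:ℝ) < x ^ 2 + 1 := by positivity
    have hRn : ‖R‖ ≤ (x ^ 2 + 1)⁻¹ := hnorm x
    have hRn0 : (0:ℝ) ≤ ‖R‖ := norm_nonneg _
    have hKn0 : (0:ℝ) ≤ ‖K‖ := norm_nonneg _
    calc x ^ 2 * ‖R * K * R‖ ≤ x ^ 2 * (‖R‖ * ‖K‖ * ‖R‖) := by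
          apply mul_le_mul_of_nonneg_left _ (by positivity)
          exact le_trans (norm_mul_le _ _)
            (mul_le_mul_of_nonneg_right (norm_mul_le _ _) (norm_nonneg _))
    _ ≤ x ^ 2 * ((x ^ 2 + 1)⁻¹ * ‖K‖ * (x ^ 2 + 1)⁻¹) := by
          apply mul_le_mul_of_nonneg_left _ (by positivity)
          apply mul_le_mul (mul_le_mul_of_nonneg_right hRn hKn0) hRn hRn0 (by positivity)
    _ = ‖K‖ * (x ^ 2 / ((x ^ 2 + 1) * (x ^ 2 + 1))) := by field_simp
    _ ≤ ‖K‖ * (1 + x ^ 2)⁻¹ := by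
          apply mul_le_mul_of_nonneg_left _ hKn0
          rw [inv_eq_one_div, div_le_div_iff₀ (by positivity) (by positivity)]
          nlinarith
  have hgint : IntegrableOn (fun x : ℝ => ‖K‖ * (1 + x ^ 2)⁻¹) (Set.Ioi 0) := by
    exact (integrable_inv_one_add_sq.integrableOn).const_mul _
  have hcont : Continuous (fun x : ℝ => x ^ 2 •
      (Ring.inverse (x ^ 2 • (1 : 𝓗 →L[ℂ] 𝓗) + H) * H₁ *
        Ring.inverse (x ^ 2 • (1 : 𝓗 →L[ℂ] 𝓗) + H) * Ring.inverse (CFC.sqrt H))) := by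
    have hAc : Continuous (fun x : ℝ => x ^ 2 • (1 : 𝓗 →L[ℂ] 𝓗) + H) := by
      exact ((continuous_pow 2).smul continuous_const).add continuous_const
    have hRc : Continuous (fun x : ℝ => Ring.inverse (x ^ 2 • (1 : 𝓗 →L[ℂ] 𝓗) + H)) := by
      rw [continuous_iff_continuousAt]
      intro x
      have h := NormedRing.inverse_continuousAt (hunit x).unit
      rw [IsUnit.unit_spec] at h
      exact ContinuousAt.comp (f := fun x : ℝ => x ^ 2 • (1 : 𝓗 →L[ℂ] 𝓗) + H) h hAc.continuousAt
    exact (continuous_pow 2).smul (((hRc.mul continuous_const).mul hRc).mul continuous_const)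
  have hint : IntegrableOn
      (fun x : ℝ => x ^ 2 •
        (Ring.inverse (x ^ 2 • (1 : 𝓗 →L[ℂ] 𝓗) + H) * H₁ *
          Ring.inverse (x ^ 2 • (1 : 𝓗 →L[ℂ] 𝓗) + H) * Ring.inverse (CFC.sqrt H)))
      (Set.Ioi 0) := by
    apply Integrable.mono' hgint hcont.aestronglyMeasurable.restrict
    exact ae_of_all _ fun x => hbound x
  refine ⟨hint, ?_⟩
  have hpi : (0:ℝ) < Real.pi := Real.pi_pos
  rw [norm_smul, Real.norm_eq_abs, abs_of_nonneg (by positivity)]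
  have hIle : ‖∫ x in Set.Ioi (0:ℝ),
      x ^ 2 • (Ring.inverse (x ^ 2 • (1 : 𝓗 →L[ℂ] 𝓗) + H) * H₁ *
        Ring.inverse (x ^ 2 • (1 : 𝓗 →L[ℂ] 𝓗) + H) * Ring.inverse (CFC.sqrt H))‖
      ≤ ‖K‖ * (Real.pi / 2) := by
    have := norm_integral_le_of_norm_le hgint (ae_of_all _ fun x => hbound x)
    refine this.trans ?_
    rw [MeasureTheory.integral_const_mul, integral_Ioi_inv_one_add_sq, Real.arctan_zero, sub_zero]
  calc 2 / Real.pi * ‖∫ x in Set.Ioi (0:ℝ),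
      x ^ 2 • (Ring.inverse (x ^ 2 • (1 : 𝓗 →L[ℂ] 𝓗) + H) * H₁ *
        Ring.inverse (x ^ 2 • (1 : 𝓗 →L[ℂ] 𝓗) + H) * Ring.inverse (CFC.sqrt H))‖
      ≤ 2 / Real.pi * (‖K‖ * (Real.pi / 2)) := by
        apply mul_le_mul_of_nonneg_left hIle (by positivity)
  _ = ‖K‖ := by field_simp
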